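/- Let E be a real Hilbert space and C a bounded skew-symmetric contraction on E with C² + 1 injective. Define V := (1 + iC)(E) ⊆ E_ℂ. Then V is a standard real subspace of E_ℂ, i.e., V is closed, V ∩ iV = {0}, and V + iV is dense in E_ℂ. -/

import Mathlib

open scoped ComplexInnerProductSpace

/-- If `C` is a bounded skew-symmetric contraction on a real
Hilbert space `E` with `1 + C²` injective, then `V = (1 + iC)E` is a standard
real subspace of `E_ℂ`: it is closed, `V ∩ iV = {0}`, and `V + iV` is dense.
The complexification is modelled via a conjugation `σ` on a complex Hilbert
space `H`, the real points being `{v | σ v = v}`. -/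
theorem stmt5 {H : Type*} [NormedAddCommGroup H] [InnerProductSpace ℂ H] [CompleteSpace H]
    (σ : H →ₛₗ[starRingEnd ℂ] H)
    (hσ2 : ∀ x, σ (σ x) = x)
    (hσinner : ∀ x y, ⟪σ x, σ y⟫ = ⟪y, x⟫)
    (C : H →L[ℂ] H)
    (hCσ : ∀ x, σ (C x) = C (σ x))
    (hskew : ∀ x y, ⟪C x, y⟫ = -⟪x, C y⟫)
    (hcontr : ∀ x, ‖C x‖ ≤ ‖x‖)
    (hinj : ∀ v : H, σ v = v → v + C (C v) = 0 → v = 0) :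
    IsClosed {x : H | ∃ v, σ v = v ∧ x = v + Complex.I • C v} ∧
    ({x : H | ∃ v, σ v = v ∧ x = v + Complex.I • C v} ∩
      {x : H | ∃ v, σ v = v ∧ x = Complex.I • (v + Complex.I • C v)} = {0}) ∧
    Dense {z : H | ∃ v w, σ v = v ∧ σ w = w ∧
        z = (v + Complex.I • C v) + Complex.I • (w + Complex.I • C w)} := by
  -- continuity of σ
  have hσcont : Continuous σ := by
    have hn : ∀ x : H, ‖σ x‖ = ‖x‖ := by
      intro x
      have h := hσinner x x
      rw [inner_self_eq_norm_sq_to_K, inner_self_eq_norm_sq_to_K] at h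
      have h2 : (‖σ x‖ : ℝ) ^ 2 = (‖x‖ : ℝ) ^ 2 := by exact_mod_cast h
      nlinarith [norm_nonneg (σ x), norm_nonneg x]
    exact (AddMonoidHomClass.isometry_of_norm σ hn).continuous
  -- σ of an element of the range
  have hσT : ∀ v : H, σ v = v → σ (v + Complex.I • C v) = v - Complex.I • C v := by
    intro v hv
    rw [map_add, map_smulₛₗ, hCσ, hv, Complex.conj_I, neg_smul, sub_eq_add_neg]
  refine ⟨?_, ?_, ?_⟩
  · -- closedness
    have hset : {x : H | ∃ v, σ v = v ∧ x = v + Complex.I • C v}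
        = {x : H | x = (2⁻¹ : ℂ) • (x + σ x) + Complex.I • C ((2⁻¹ : ℂ) • (x + σ x))} := by
      ext x
      constructor
      · rintro ⟨v, hv, rfl⟩
        have hg : (2⁻¹ : ℂ) • (v + Complex.I • C v + σ (v + Complex.I • C v)) = v := by
          rw [hσT v hv]; module
        simp only [Set.mem_setOf_eq]
        rw [hg]
      · intro hx
        refine ⟨(2⁻¹ : ℂ) • (x + σ x), ?_, hx⟩
        rw [map_smulₛₗ, map_add, hσ2]
        rw [show (starRingEnd ℂ) (2⁻¹ : ℂ) = (2⁻¹ : ℂ) by simp [map_inv₀, map_ofNat]]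
        module
    rw [hset]
    have hcg : Continuous fun x : H => (2⁻¹ : ℂ) • (x + σ x) :=
      (continuous_id.add hσcont).const_smul _
    exact isClosed_eq continuous_id (hcg.add ((C.continuous.comp hcg).const_smul _))
  · -- intersection
    ext x
    simp only [Set.mem_inter_iff, Set.mem_setOf_eq, Set.mem_singleton_iff]
    constructor
    · rintro ⟨⟨v, hv, hxv⟩, ⟨w, hw, hxw⟩⟩
      have h1 : v + Complex.I • C v = Complex.I • w - C w := by
        rw [← hxv, hxw, smul_add, smul_smul, Complex.I_mul_I, neg_one_smul, ← sub_eq_add_neg]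
      have h2 : v - Complex.I • C v = -(Complex.I • w) - C w := by
        have := congrArg σ h1
        rw [hσT v hv, map_sub, map_smulₛₗ, hCσ, hw, Complex.conj_I, neg_smul] at this
        exact this
      have hadd : (2 : ℂ) • v = (2 : ℂ) • (-C w) := by
        have h3 : (v + Complex.I • C v) + (v - Complex.I • C v)
            = (Complex.I • w - C w) + (-(Complex.I • w) - C w) := by rw [h1, h2]
        linear_combination (norm := module) h3
      have hv' : v = -C w := smul_right_injective H two_ne_zero hadd
      have hsub : Complex.I • ((2 : ℂ) • C v) = Complex.I • ((2 : ℂ) • w) := by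
        have h3 : (v + Complex.I • C v) - (v - Complex.I • C v)
            = (Complex.I • w - C w) - (-(Complex.I • w) - C w) := by rw [h1, h2]
        linear_combination (norm := module) h3
      have hw' : C v = w :=
        smul_right_injective H two_ne_zero (smul_right_injective H Complex.I_ne_zero hsub)
      have hv0 : v = 0 := by
        apply hinj v hv
        rw [hw', show C w = -v from by rw [hv', neg_neg]]
        abel
      rw [hxv, hv0, map_zero, smul_zero, add_zero]
    · rintro rfl
      exact ⟨⟨0, map_zero σ, by simp⟩, ⟨0, map_zero σ, by simp⟩⟩
  · -- density
    letI : InnerProductSpace ℝ H := InnerProductSpace.complexToReal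
    have hσr : ∀ (r : ℝ) (v : H), σ (r • v) = r • σ v := by
      intro r v
      rw [← algebraMap_smul ℂ r v, map_smulₛₗ, Complex.coe_algebraMap, Complex.conj_ofReal,
        ← Complex.coe_algebraMap, algebraMap_smul]
    have hCreal : ∀ v : H, σ v = v → σ (C v) = C v := fun v hv => by rw [hCσ, hv]
    have hre : ∀ x y : H, @inner ℝ H _ x y = (⟪x, y⟫ : ℂ).re := fun x y => rfl
    have hrealinner : ∀ x y : H, σ x = x → σ y = y → (⟪x, y⟫ : ℂ).im = 0 := by
      intro x y hx hy
      have h := hσinner x y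
      rw [hx, hy, ← inner_conj_symm y x] at h
      exact Complex.conj_eq_iff_im.mp h.symm
    set S : Set H := {z : H | ∃ v w, σ v = v ∧ σ w = w ∧
        z = (v + Complex.I • C v) + Complex.I • (w + Complex.I • C w)} with hS
    have hmemT : ∀ v : H, σ v = v → v + Complex.I • C v ∈ S := fun v hv =>
      ⟨v, 0, hv, map_zero σ, by simp⟩
    have hmemiT : ∀ w : H, σ w = w → Complex.I • w - C w ∈ S := fun w hw =>
      ⟨0, w, map_zero σ, hw,
        by simp [smul_add, smul_smul, Complex.I_mul_I, neg_one_smul, sub_eq_add_neg]⟩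
    let K : Submodule ℝ H :=
      { carrier := S
        add_mem' := by
          rintro a b ⟨v1, w1, hv1, hw1, rfl⟩ ⟨v2, w2, hv2, hw2, rfl⟩
          refine ⟨v1 + v2, w1 + w2, by rw [map_add, hv1, hv2], by rw [map_add, hw1, hw2], ?_⟩
          rw [map_add, map_add]
          module
        zero_mem' := ⟨0, 0, map_zero σ, map_zero σ, by simp⟩
        smul_mem' := by
          rintro r z ⟨v, w, hv, hw, rfl⟩
          refine ⟨r • v, r • w, by rw [hσr, hv], by rw [hσr, hw], ?_⟩
          rw [C.map_smul_of_tower, C.map_smul_of_tower]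
          module }
    show Dense (K : Set H)
    rw [Submodule.dense_iff_topologicalClosure_eq_top, Submodule.topologicalClosure_eq_top_iff,
      Submodule.eq_bot_iff]
    intro z hz
    rw [Submodule.mem_orthogonal] at hz
    -- complex orthogonality against the range of 1 + iC
    have hC0 : ∀ v : H, σ v = v → (⟪v + Complex.I • C v, z⟫ : ℂ) = 0 := by
      intro v hv
      have h1 : (⟪v + Complex.I • C v, z⟫ : ℂ).re = 0 := by
        rw [← hre]; exact hz _ (hmemT v hv)
      have h2 : (⟪v + Complex.I • C v, z⟫ : ℂ).im = 0 := by
        have h3 := hz _ (hmemiT v hv)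
        rw [hre] at h3
        have h4 : Complex.I • v - C v = Complex.I • (v + Complex.I • C v) := by
          rw [smul_add, smul_smul, Complex.I_mul_I, neg_one_smul, sub_eq_add_neg]
        rw [h4, inner_smul_left, Complex.conj_I] at h3
        simp at h3; exact h3
      exact Complex.ext h1 h2
    -- decompose z into real and imaginary parts
    obtain ⟨a, b, hza, hzb, hzab⟩ : ∃ a b : H, σ a = a ∧ σ b = b ∧ z = a + Complex.I • b := by
      refine ⟨(2⁻¹ : ℂ) • (z + σ z), (-(2⁻¹ * Complex.I)) • (z - σ z), ?_, ?_, ?_⟩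
      · rw [map_smulₛₗ, map_add, hσ2,
          show (starRingEnd ℂ) (2⁻¹ : ℂ) = (2⁻¹ : ℂ) by simp [map_inv₀, map_ofNat]]
        module
      · rw [map_smulₛₗ, map_sub, hσ2,
          show (starRingEnd ℂ) (-(2⁻¹ * Complex.I)) = 2⁻¹ * Complex.I by
            rw [map_neg, map_mul, map_inv₀, Complex.conj_I, map_ofNat]; ring]
        module
      · rw [smul_smul,
          show Complex.I * (-(2⁻¹ * Complex.I)) = (2⁻¹ : ℂ) by
            linear_combination (-(2⁻¹ : ℂ)) * Complex.I_mul_I]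
        module
    -- expansion of the orthogonality relation
    have expand : ∀ v : H, σ v = v →
        (⟪v, a⟫ : ℂ) + Complex.I * ⟪v, b⟫ - Complex.I * ⟪C v, a⟫ + ⟪C v, b⟫ = 0 := by
      intro v hv
      have h := hC0 v hv
      rw [hzab] at h
      simp only [inner_add_left, inner_add_right, inner_smul_left, inner_smul_right,
        Complex.conj_I] at h
      linear_combination h + (⟪C v, b⟫ : ℂ) * Complex.I_mul_I
    have hA : ∀ v : H, σ v = v → (⟪v, a⟫ : ℂ).re + (⟪C v, b⟫ : ℂ).re = 0 := by
      intro v hv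
      have h := congrArg Complex.re (expand v hv)
      simpa [Complex.add_re, Complex.sub_re, Complex.mul_re, hrealinner v a hv hza,
        hrealinner v b hv hzb, hrealinner _ a (hCreal v hv) hza,
        hrealinner _ b (hCreal v hv) hzb] using h
    have hB : ∀ v : H, σ v = v → (⟪v, b⟫ : ℂ).re - (⟪C v, a⟫ : ℂ).re = 0 := by
      intro v hv
      have h := congrArg Complex.im (expand v hv)
      simpa [Complex.add_im, Complex.sub_im, Complex.mul_im, hrealinner v a hv hza,
        hrealinner v b hv hzb, hrealinner _ a (hCreal v hv) hza,
        hrealinner _ b (hCreal v hv) hzb] using h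
    -- real skew-symmetry
    have hskewre : ∀ x y : H, (⟪C x, y⟫ : ℂ).re = -(⟪x, C y⟫ : ℂ).re := by
      intro x y; rw [hskew]; simp
    -- a = C b
    have haCb : a = C b := by
      have h : ∀ v : H, σ v = v → @inner ℝ H _ v (a - C b) = 0 := by
        intro v hv
        rw [inner_sub_right, hre, hre]
        have := hA v hv
        rw [hskewre v b] at this
        linarith
      have h2 := h (a - C b) (by rw [map_sub, hza, hCreal b hzb])
      exact sub_eq_zero.mp (inner_self_eq_zero.mp h2)
    -- b + C a = 0
    have hbCa : b + C a = 0 := by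
      have h : ∀ v : H, σ v = v → @inner ℝ H _ v (b + C a) = 0 := by
        intro v hv
        rw [inner_add_right, hre, hre]
        have := hB v hv
        rw [hskewre v a] at this
        linarith
      have h2 := h (b + C a) (by rw [map_add, hzb, hCreal a hza])
      exact inner_self_eq_zero.mp h2
    have hb0 : b = 0 := by
      apply hinj b hzb
      rw [← haCb]
      exact hbCa
    have ha0 : a = 0 := by rw [haCb, hb0, map_zero]
    rw [hzab, ha0, hb0, smul_zero, add_zero]
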